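/- Let H, H̃ ∈ ℝ^{m×m} be positive definite with e^{-ε}·xᵀHx ≤ xᵀH̃x ≤ e^{ε}·xᵀHx for all x ∈ ℝᵐ, where ε > 0. Then for every g ∈ ℝᵐ, |gᵀ(H⁻¹ − H̃⁻¹ H H̃⁻¹)g| ≤ max{e^{2ε} − 1, 1 − e^{-2ε}} · gᵀH⁻¹g. -/

import Mathlib

open Matrix

lemma real_symm {m : ℕ} {A : Matrix (Fin m) (Fin m) ℝ} (h : A.IsHermitian) : Aᵀ = A := by
  have := h.eq
  rwa [Matrix.conjTranspose_eq_transpose_of_trivial] at this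

lemma symm_bilin {m : ℕ} {A : Matrix (Fin m) (Fin m) ℝ} (h : Aᵀ = A) (u v : Fin m → ℝ) :
    u ⬝ᵥ A.mulVec v = v ⬝ᵥ A.mulVec u := by
  rw [Matrix.dotProduct_mulVec, ← Matrix.mulVec_transpose, h]
  exact dotProduct_comm _ _

lemma mulVec_dot {m : ℕ} {A : Matrix (Fin m) (Fin m) ℝ} (h : Aᵀ = A) (u v : Fin m → ℝ) :
    (A.mulVec u) ⬝ᵥ v = u ⬝ᵥ A.mulVec v := by
  rw [dotProduct_comm, symm_bilin h]

-- Cauchy–Schwarz for a positive semidefinite symmetric real matrix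
lemma cs {m : ℕ} {A : Matrix (Fin m) (Fin m) ℝ} (hA : A.PosSemidef) (h : Aᵀ = A)
    (u v : Fin m → ℝ) :
    (u ⬝ᵥ A.mulVec v) ^ 2 ≤ (u ⬝ᵥ A.mulVec u) * (v ⬝ᵥ A.mulVec v) := by
  have key : ∀ t : ℝ, 0 ≤ (v ⬝ᵥ A.mulVec v) * (t * t) + (2 * (u ⬝ᵥ A.mulVec v)) * t +
      (u ⬝ᵥ A.mulVec u) := by
    intro t
    have h0 := hA.dotProduct_mulVec_nonneg (u + t • v)
    have hsym := symm_bilin h v u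
    simp only [star_trivial, Matrix.mulVec_add, Matrix.mulVec_smul, dotProduct_add,
      add_dotProduct, dotProduct_smul, smul_dotProduct,
      smul_eq_mul] at h0
    rw [hsym] at h0
    nlinarith [h0]
  have := discrim_le_zero key
  rw [discrim] at this
  nlinarith [this]

-- the scalar core of the argument
lemma scalar_core (E a b c d : ℝ) (hE : 0 < E) (hapos : 0 < a) (hcnn : 0 ≤ c)
    (h1 : E⁻¹ * c ≤ b) (h2 : b ≤ E * c) (h3 : E⁻¹ * a ≤ d) (h4 : d ≤ E * a)
    (csH : b ^ 2 ≤ a * c) (csHt : a ^ 2 ≤ b * d) :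
    |a - c| ≤ max (E ^ 2 - 1) (1 - (E ^ 2)⁻¹) * a := by
  set F : ℝ := E⁻¹ with hFdef
  have hFpos : 0 < F := inv_pos.2 hE
  have hEF : E * F = 1 := mul_inv_cancel₀ hE.ne'
  have hF2 : E ^ 2 * F ^ 2 = 1 := by rw [← mul_pow, hEF, one_pow]
  have hinv : (E ^ 2)⁻¹ = F ^ 2 := by rw [hFdef, inv_pow]
  have hbnn : 0 ≤ b := le_trans (by positivity) h1
  have hdpos : 0 < d := lt_of_lt_of_le (by positivity) h3
  -- c ≤ E² a
  have step1 : c ≤ E ^ 2 * a := by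
    rcases eq_or_lt_of_le hcnn with h0 | h0
    · nlinarith
    · have t1 : (F * c) ^ 2 ≤ b ^ 2 := by
        apply pow_le_pow_left₀ (by positivity) h1
      have t2 : F ^ 2 * c ^ 2 ≤ a * c := by nlinarith [csH]
      have t3 : c * c ≤ (E ^ 2 * a) * c := by nlinarith [mul_le_mul_of_nonneg_left t2 (sq_nonneg E)]
      exact le_of_mul_le_mul_right t3 h0
  -- a ≤ E² c
  have step2 : a ≤ E ^ 2 * c := by
    have t : a ^ 2 ≤ (E * c) * (E * a) :=
      le_trans csHt (mul_le_mul h2 h4 hdpos.le (by positivity))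
    have t2 : a * a ≤ (E ^ 2 * c) * a := by nlinarith
    exact le_of_mul_le_mul_right t2 hapos
  have step2' : F ^ 2 * a ≤ c := by nlinarith [mul_le_mul_of_nonneg_left step2 (sq_nonneg F)]
  rw [abs_sub_le_iff]
  constructor
  · calc a - c ≤ (1 - F ^ 2) * a := by nlinarith
      _ ≤ max (E ^ 2 - 1) (1 - (E ^ 2)⁻¹) * a := by
          apply mul_le_mul_of_nonneg_right _ hapos.le
          rw [hinv]; exact le_max_right _ _
  · calc c - a ≤ (E ^ 2 - 1) * a := by nlinarith
      _ ≤ max (E ^ 2 - 1) (1 - (E ^ 2)⁻¹) * a := by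
          apply mul_le_mul_of_nonneg_right _ hapos.le
          exact le_max_left _ _

theorem stmt_13 {m : ℕ} (H Ht : Matrix (Fin m) (Fin m) ℝ)
    (hH : H.PosDef) (hHt : Ht.PosDef) (ε : ℝ) (hε : 0 < ε)
    (happrox : ∀ x : Fin m → ℝ,
      Real.exp (-ε) * (x ⬝ᵥ H.mulVec x) ≤ x ⬝ᵥ Ht.mulVec x ∧
      x ⬝ᵥ Ht.mulVec x ≤ Real.exp ε * (x ⬝ᵥ H.mulVec x)) :
    ∀ g : Fin m → ℝ,
      |g ⬝ᵥ (H⁻¹ - Ht⁻¹ * H * Ht⁻¹).mulVec g|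
        ≤ max (Real.exp (2*ε) - 1) (1 - Real.exp (-(2*ε))) * (g ⬝ᵥ H⁻¹.mulVec g) := by
  intro g
  by_cases hg : g = 0
  · simp [hg]
  have hHs : Hᵀ = H := real_symm hH.isHermitian
  have hHts : Htᵀ = Ht := real_symm hHt.isHermitian
  have hHtis : (Ht⁻¹)ᵀ = Ht⁻¹ := real_symm hHt.isHermitian.inv
  set x : Fin m → ℝ := H⁻¹.mulVec g with hx
  set y : Fin m → ℝ := Ht⁻¹.mulVec g with hy
  have hHx : H.mulVec x = g := by
    rw [hx, Matrix.mulVec_mulVec, Matrix.mul_nonsing_inv _ (isUnit_iff_ne_zero.2 hH.det_pos.ne'),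
      Matrix.one_mulVec]
  have hHty : Ht.mulVec y = g := by
    rw [hy, Matrix.mulVec_mulVec, Matrix.mul_nonsing_inv _ (isUnit_iff_ne_zero.2 hHt.det_pos.ne'),
      Matrix.one_mulVec]
  -- identities
  have I2 : g ⬝ᵥ x = x ⬝ᵥ H.mulVec x := by
    rw [hHx]; exact dotProduct_comm _ _
  have I3 : g ⬝ᵥ y = y ⬝ᵥ Ht.mulVec y := by
    rw [hHty]; exact dotProduct_comm _ _
  have I4 : g ⬝ᵥ x = y ⬝ᵥ Ht.mulVec x := by
    conv_lhs => rw [← hHty]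
    exact mulVec_dot hHts y x
  have I5 : g ⬝ᵥ y = x ⬝ᵥ H.mulVec y := by
    conv_lhs => rw [← hHx]
    exact mulVec_dot hHs x y
  have I1 : g ⬝ᵥ (H⁻¹ - Ht⁻¹ * H * Ht⁻¹).mulVec g = g ⬝ᵥ x - y ⬝ᵥ H.mulVec y := by
    rw [Matrix.sub_mulVec, dotProduct_sub]
    congr 1
    rw [← Matrix.mulVec_mulVec, ← Matrix.mulVec_mulVec, ← hy,
      symm_bilin hHtis g (H.mulVec y), ← hy, mulVec_dot hHs y y]
  -- scalar facts
  have hx0 : x ≠ 0 := fun h0 => hg (by rw [← hHx, h0, Matrix.mulVec_zero])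
  have hapos : 0 < g ⬝ᵥ x := by
    rw [I2]; simpa using hH.dotProduct_mulVec_pos hx0
  have hcnn : 0 ≤ y ⬝ᵥ H.mulVec y := by simpa using hH.posSemidef.dotProduct_mulVec_nonneg y
  have hbc := happrox y
  have hda := happrox x
  rw [← I3] at hbc
  rw [← I2] at hda
  have csH : (g ⬝ᵥ y) ^ 2 ≤ (g ⬝ᵥ x) * (y ⬝ᵥ H.mulVec y) := by
    rw [I5, I2]; exact cs hH.posSemidef hHs x y
  have csHt : (g ⬝ᵥ x) ^ 2 ≤ (g ⬝ᵥ y) * (x ⬝ᵥ Ht.mulVec x) := by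
    rw [I4, I3]; exact cs hHt.posSemidef hHts y x
  -- exponential bookkeeping
  have hmε : Real.exp (-ε) = (Real.exp ε)⁻¹ := Real.exp_neg ε
  have h2ε : Real.exp (2*ε) = Real.exp ε ^ 2 := by rw [two_mul, Real.exp_add, sq]
  have hm2ε : Real.exp (-(2*ε)) = (Real.exp ε ^ 2)⁻¹ := by rw [Real.exp_neg, h2ε]
  rw [I1, h2ε, hm2ε]
  rw [hmε] at hbc hda
  exact scalar_core (Real.exp ε) (g ⬝ᵥ x) (g ⬝ᵥ y) (y ⬝ᵥ H.mulVec y) (x ⬝ᵥ Ht.mulVec x)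
    (Real.exp_pos ε) hapos hcnn hbc.1 hbc.2 hda.1 hda.2 csH csHt
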